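/- Let N ≥ 2 and suppose (μ_k)_{k≥1} is a nondecreasing sequence of reals satisfying the Weyl-type lower bound μ_k ≥ c k^{2/(N-1)} for all k ≥ k₀ with c > 0. Define α_k = (N−2)/2 − √(((N−2)/2)² + μ_k) and suppose there exist C₂ > 0 and δ₂ ≥ 0 with sup-norm bounds ‖ψ_k‖_∞ ≤ C₂ k^{δ₂}. Then for every compact set 𝒦 ⊂ ℝ^N, the series Σ_{k>k₀} |j_{−α_k}(|x||y|)| |ψ_k(x/|x|)| |ψ_k(y/|y|)| converges uniformly for x, y ∈ 𝒦, where j_ν(r) = r^{−(N−2)/2} J_{ν+(N−2)/2}(r). -/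

import Mathlib

set_option maxHeartbeats 1000000


open Real Filter

/-- The Bessel function of the first kind of (real) order `ν`. -/
noncomputable def besselJ (ν z : ℝ) : ℝ :=
  ∑' k : ℕ, (-1) ^ k / (Real.Gamma (k + 1) * Real.Gamma (k + ν + 1)) *
    (z / 2) ^ (2 * (k : ℝ) + ν)

/-- The modified spherical Bessel function `j_ν(r) = r^{-(N-2)/2} J_{ν+(N-2)/2}(r)`. -/
noncomputable def sphBesselJ (N : ℕ) (ν r : ℝ) : ℝ :=
  r ^ (-(((N : ℝ) - 2) / 2)) * besselJ (ν + ((N : ℝ) - 2) / 2) r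

private lemma gamma_le_gamma_nat_add (ν : ℝ) (hν : 0 ≤ ν) (k : ℕ) :
    Real.Gamma (ν + 1) ≤ Real.Gamma ((k : ℝ) + ν + 1) := by
  induction k with
  | zero => simp
  | succ n ih =>
    have h1 : (0:ℝ) < (n:ℝ) + ν + 1 := by positivity
    have h2 : ((n+1:ℕ):ℝ) + ν + 1 = ((n:ℝ) + ν + 1) + 1 := by push_cast; ring
    rw [h2, Real.Gamma_add_one h1.ne']
    have h3 : (0:ℝ) < Real.Gamma ((n:ℝ) + ν + 1) := Real.Gamma_pos_of_pos h1
    nlinarith [Real.Gamma_pos_of_pos h1]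

private lemma besselJ_abs_le (ν z : ℝ) (hν : 0 ≤ ν) (hz : 0 < z) :
    |besselJ ν z| ≤ (z/2) ^ ν * Real.exp ((z/2)^2) / Real.Gamma (ν + 1) := by
  have hw0 : 0 < z / 2 := by positivity
  have hΓν : 0 < Real.Gamma (ν+1) := Real.Gamma_pos_of_pos (by linarith)
  set w := z / 2 with hw
  set f : ℕ → ℝ := fun k => (-1)^k / (Real.Gamma ((k:ℝ)+1) * Real.Gamma ((k:ℝ)+ν+1)) *
    w ^ (2*(k:ℝ)+ν) with hf
  set g : ℕ → ℝ := fun k => w ^ ν / Real.Gamma (ν+1) * ((w^2)^k / (Nat.factorial k : ℝ))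
    with hg
  have hfg : ∀ k, |f k| ≤ g k := by
    intro k
    have hΓ1 : (0:ℝ) < Real.Gamma ((k:ℝ)+1) := Real.Gamma_pos_of_pos (by positivity)
    have hΓ2 : (0:ℝ) < Real.Gamma ((k:ℝ)+ν+1) := Real.Gamma_pos_of_pos (by positivity)
    have hpow : w ^ (2*(k:ℝ)+ν) = (w^2)^k * w ^ ν := by
      rw [Real.rpow_add hw0]
      congr 1
      rw [show (2*(k:ℝ)) = ((2*k : ℕ):ℝ) by push_cast; ring, Real.rpow_natCast, pow_mul]
    have habs : |f k| = 1 / (Real.Gamma ((k:ℝ)+1) * Real.Gamma ((k:ℝ)+ν+1)) *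
        ((w^2)^k * w ^ ν) := by
      rw [hf, abs_mul, abs_div, abs_pow, abs_neg, abs_one, one_pow, hpow,
        abs_of_pos (mul_pos hΓ1 hΓ2), abs_of_pos (by positivity : (0:ℝ) < (w^2)^k * w ^ ν)]
    rw [habs, hg]
    have hfac : Real.Gamma ((k:ℝ)+1) = (Nat.factorial k : ℝ) := Real.Gamma_nat_eq_factorial k
    have hG : Real.Gamma (ν+1) ≤ Real.Gamma ((k:ℝ)+ν+1) := gamma_le_gamma_nat_add ν hν k
    rw [hfac]
    have hfacpos : (0:ℝ) < (Nat.factorial k : ℝ) := by positivity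
    have key : 1 / ((Nat.factorial k : ℝ) * Real.Gamma ((k:ℝ)+ν+1)) ≤
        1 / ((Nat.factorial k : ℝ) * Real.Gamma (ν+1)) := by
      apply one_div_le_one_div_of_le (by positivity)
      exact mul_le_mul_of_nonneg_left hG hfacpos.le
    calc 1 / ((Nat.factorial k : ℝ) * Real.Gamma ((k:ℝ)+ν+1)) * ((w^2)^k * w ^ ν)
        ≤ 1 / ((Nat.factorial k : ℝ) * Real.Gamma (ν+1)) * ((w^2)^k * w ^ ν) := by
          apply mul_le_mul_of_nonneg_right key (by positivity)
      _ = w ^ ν / Real.Gamma (ν+1) * ((w^2)^k / (Nat.factorial k : ℝ)) := by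
          field_simp
  have hgsum : Summable g := by
    rw [hg]; exact (Real.summable_pow_div_factorial (w^2)).mul_left _
  have hfabs : Summable (fun k => |f k|) :=
    Summable.of_nonneg_of_le (fun _ => abs_nonneg _) hfg hgsum
  have hfsum : Summable f := by
    rw [← summable_abs_iff]; exact hfabs
  have h1 : |besselJ ν z| ≤ ∑' k, |f k| := by
    have : besselJ ν z = ∑' k, f k := rfl
    rw [this]
    have hn : Summable (fun k => ‖f k‖) := by simpa only [Real.norm_eq_abs] using hfabs
    simpa only [Real.norm_eq_abs] using norm_tsum_le_tsum_norm hn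
  have h2 : ∑' k, |f k| ≤ ∑' k, g k := Summable.tsum_le_tsum hfg hfabs hgsum
  have h3 : ∑' k, g k = w ^ ν * Real.exp (w^2) / Real.Gamma (ν+1) := by
    rw [hg, tsum_mul_left]
    have : ∑' k : ℕ, (w^2)^k / (Nat.factorial k : ℝ) = Real.exp (w^2) := by
      rw [Real.exp_eq_exp_ℝ, NormedSpace.exp_eq_tsum_div]
    rw [this]; ring
  calc |besselJ ν z| ≤ ∑' k, g k := le_trans h1 h2
    _ = w ^ ν * Real.exp (w^2) / Real.Gamma (ν+1) := h3
    _ = (z/2) ^ ν * Real.exp ((z/2)^2) / Real.Gamma (ν+1) := by rw [hw]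

private lemma sphBesselJ_abs_le (N : ℕ) (hN : 2 ≤ N) (β M r : ℝ)
    (hβa : ((N:ℝ)-2)/2 ≤ β) (hβ0 : 0 < β) (hM : 1 ≤ M) (hr0 : 0 ≤ r) (hrM : r ≤ M) :
    |sphBesselJ N (β - ((N:ℝ)-2)/2) r| ≤ Real.exp ((M/2)^2) * M ^ β / Real.Gamma (β+1) := by
  have hN2 : (2:ℝ) ≤ (N:ℝ) := by exact_mod_cast hN
  set a : ℝ := ((N:ℝ)-2)/2 with ha
  have ha0 : 0 ≤ a := by rw [ha]; linarith
  have hΓ : 0 < Real.Gamma (β+1) := Real.Gamma_pos_of_pos (by linarith)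
  have hord : β - a + a = β := by ring
  have hRHS : 0 < Real.exp ((M/2)^2) * M ^ β / Real.Gamma (β+1) := by positivity
  rcases eq_or_lt_of_le hr0 with h0 | hr
  · -- r = 0
    have hb0 : besselJ β 0 = 0 := by
      unfold besselJ
      have hz : ∀ k : ℕ, (-1:ℝ)^k / (Real.Gamma ((k:ℝ)+1) * Real.Gamma ((k:ℝ)+β+1)) *
          ((0:ℝ)/2) ^ (2*(k:ℝ)+β) = 0 := by
        intro k
        rw [zero_div, Real.zero_rpow (by positivity : 2*(k:ℝ)+β ≠ 0), mul_zero]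
      simp only [hz, tsum_zero]
    have : sphBesselJ N (β - a) r = 0 := by
      rw [← h0]
      unfold sphBesselJ
      rw [← ha, hord, hb0, mul_zero]
    rw [this, abs_zero]
    exact hRHS.le
  · -- r > 0
    have hbound := besselJ_abs_le β r (by linarith) hr
    unfold sphBesselJ
    rw [← ha, hord, abs_mul, abs_of_nonneg (Real.rpow_nonneg hr0 _)]
    have key : r ^ (-a) * ((r/2) ^ β * Real.exp ((r/2)^2) / Real.Gamma (β+1)) ≤
        Real.exp ((M/2)^2) * M ^ β / Real.Gamma (β+1) := by
      have h1 : r ^ (-a) * (r/2) ^ β ≤ M ^ β := by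
        have e1 : (r/2) ^ β = r ^ β / 2 ^ β := Real.div_rpow hr0 (by norm_num) β
        have e2 : r ^ (-a) * r ^ β = r ^ (β - a) := by
          rw [← Real.rpow_add hr]; congr 1; ring
        have e3 : (1:ℝ) ≤ (2:ℝ) ^ β := by
          calc (1:ℝ) = (2:ℝ) ^ (0:ℝ) := by rw [Real.rpow_zero]
            _ ≤ (2:ℝ) ^ β := Real.rpow_le_rpow_of_exponent_le (by norm_num) hβ0.le
        calc r ^ (-a) * (r/2) ^ β = r ^ (β - a) / 2 ^ β := by
              rw [e1, ← e2]; ring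
          _ ≤ r ^ (β - a) := by
              apply div_le_self (Real.rpow_nonneg hr0 _) e3
          _ ≤ M ^ (β - a) := Real.rpow_le_rpow hr0 hrM (by linarith)
          _ ≤ M ^ β := Real.rpow_le_rpow_of_exponent_le hM (by linarith)
      have h2 : Real.exp ((r/2)^2) ≤ Real.exp ((M/2)^2) := by
        apply Real.exp_le_exp.2
        have : r/2 ≤ M/2 := by linarith
        nlinarith
      calc r ^ (-a) * ((r/2) ^ β * Real.exp ((r/2)^2) / Real.Gamma (β+1))
          = (r ^ (-a) * (r/2) ^ β) * Real.exp ((r/2)^2) / Real.Gamma (β+1) := by ring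
        _ ≤ M ^ β * Real.exp ((M/2)^2) / Real.Gamma (β+1) := by
            have hA : 0 ≤ r ^ (-a) * (r/2) ^ β := by positivity
            rw [div_le_div_iff_of_pos_right hΓ]
            exact mul_le_mul h1 h2 (Real.exp_pos _).le (by positivity)
        _ = Real.exp ((M/2)^2) * M ^ β / Real.Gamma (β+1) := by ring
    calc r ^ (-a) * |besselJ β r|
        ≤ r ^ (-a) * ((r/2) ^ β * Real.exp ((r/2)^2) / Real.Gamma (β+1)) :=
          mul_le_mul_of_nonneg_left hbound (Real.rpow_nonneg hr0 _)
      _ ≤ _ := key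

private lemma pow_sub_le_factorial (K : ℕ) : ∀ n, K ≤ n → K ^ (n - K) ≤ Nat.factorial n := by
  intro n hn
  induction n, hn using Nat.le_induction with
  | base => simp [Nat.one_le_iff_ne_zero, Nat.factorial_ne_zero]
  | succ n hn ih =>
    have h1 : n + 1 - K = (n - K) + 1 := by omega
    rw [h1, pow_succ, Nat.factorial_succ]
    calc K ^ (n - K) * K ≤ Nat.factorial n * (n+1) := Nat.mul_le_mul ih (by omega)
      _ = (n+1) * Nat.factorial n := Nat.mul_comm _ _

private lemma summable_bound (M a ε C s : ℝ) (hM : 1 ≤ M) (ha : 0 < a) (hε : 0 < ε)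
    (hC : 0 < C) (hs : 0 ≤ s) (u β : ℕ → ℝ) (hu0 : ∀ k, 0 ≤ u k)
    (hub : ∀ k : ℕ, u k ≤ C * ((k:ℝ)+1) ^ s * (M ^ β k / Real.Gamma (β k + 1)))
    (hβ : ∀ k : ℕ, a * ((k:ℝ)+1) ^ ε ≤ β k) :
    Summable u := by
  have hx0 : ∀ k : ℕ, (0:ℝ) < (k:ℝ)+1 := fun k => by positivity
  have hβ0 : ∀ k, 0 < β k := fun k => lt_of_lt_of_le (by positivity) (hβ k)
  -- β tends to infinity
  have hxt : Tendsto (fun k : ℕ => ((k:ℝ)+1)) atTop atTop :=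
    tendsto_atTop_add_const_right atTop 1 tendsto_natCast_atTop_atTop
  have hβt : Tendsto β atTop atTop := by
    apply tendsto_atTop_mono hβ
    exact ((tendsto_rpow_atTop hε).comp hxt).const_mul_atTop ha
  set K : ℕ := max 2 (Nat.ceil (2*M)) with hK
  have hK2 : 2 ≤ K := le_max_left _ _
  have hKM : 2*M ≤ (K:ℝ) := by
    calc 2*M ≤ (Nat.ceil (2*M) : ℝ) := Nat.le_ceil _
      _ ≤ (K:ℝ) := by exact_mod_cast Nat.cast_le.2 (le_max_right 2 (Nat.ceil (2*M)))
  have hKpos : (0:ℝ) < (K:ℝ) := by positivity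
  set C' : ℝ := C * (2*M*(K:ℝ)^K) with hC'
  have hC'pos : 0 < C' := by positivity
  -- core estimate
  have core : ∀ k, (K:ℝ)+1 ≤ β k →
      M ^ β k / Real.Gamma (β k + 1) ≤ (2*M*(K:ℝ)^K) * (1/2:ℝ) ^ (β k) := by
    intro k hk
    set n : ℕ := Nat.floor (β k) with hn
    have hnK : K ≤ n := Nat.le_floor (by linarith)
    have hfl : (n:ℝ) ≤ β k := Nat.floor_le (hβ0 k).le
    have hlt : β k < (n:ℝ) + 1 := Nat.lt_floor_add_one _
    have hΓfac : (Nat.factorial n : ℝ) ≤ Real.Gamma (β k + 1) := by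
      have e1 : Real.Gamma ((n:ℝ)+1) = (Nat.factorial n : ℝ) := Real.Gamma_nat_eq_factorial n
      rw [← e1]
      apply Real.Gamma_strictMonoOn_Ici.monotoneOn _ _ (by linarith)
      · simp only [Set.mem_Ici]
        have : (2:ℝ) ≤ (K:ℝ) := by exact_mod_cast hK2
        have : (K:ℝ) ≤ (n:ℝ) := by exact_mod_cast hnK
        linarith [show (2:ℝ) ≤ (K:ℝ) by exact_mod_cast hK2]
      · simp only [Set.mem_Ici]
        have : (2:ℝ) ≤ (K:ℝ) := by exact_mod_cast hK2
        linarith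
    have hMn : M ^ β k ≤ M ^ (n+1 : ℕ) := by
      calc M ^ β k ≤ M ^ ((n:ℝ)+1) := Real.rpow_le_rpow_of_exponent_le hM hlt.le
        _ = M ^ (n+1 : ℕ) := by rw [show ((n:ℝ)+1) = ((n+1:ℕ):ℝ) by push_cast; ring,
            Real.rpow_natCast]
    have hfacK : ((K:ℝ))^(n-K : ℕ) ≤ (Nat.factorial n : ℝ) := by
      exact_mod_cast Nat.cast_le.2 (pow_sub_le_factorial K n hnK)
    have hKn0 : (0:ℝ) < (K:ℝ)^(n-K : ℕ) := by positivity
    have step1 : M ^ β k / Real.Gamma (β k + 1) ≤ M ^ (n+1 : ℕ) / (K:ℝ)^(n-K : ℕ) :=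
      div_le_div₀ (by positivity) hMn hKn0 (hfacK.trans hΓfac)
    have step2 : M ^ (n+1 : ℕ) / (K:ℝ)^(n-K : ℕ) = M * (K:ℝ)^K * (M/(K:ℝ))^n := by
      have e : ((K:ℝ))^(n-K : ℕ) * (K:ℝ)^K = (K:ℝ)^n := by
        rw [← pow_add]; congr 1; omega
      have hKn : ((K:ℝ))^n ≠ 0 := by positivity
      field_simp [div_pow]
      rw [div_pow, show (K:ℝ)^(n-K : ℕ) * M * (K:ℝ)^K * (M^n / (K:ℝ)^n) = ((K:ℝ)^(n-K : ℕ) * (K:ℝ)^K) * M * M^n / (K:ℝ)^n by ring, e, eq_div_iff hKn]; ring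
    have step3 : (M/(K:ℝ))^n ≤ (1/2:ℝ)^n := by
      apply pow_le_pow_left₀ (by positivity)
      rw [div_le_div_iff₀ hKpos (by norm_num)]
      linarith
    have step4 : ((1:ℝ)/2)^n ≤ 2 * (1/2:ℝ) ^ (β k) := by
      have e1 : ((1:ℝ)/2)^n = (1/2:ℝ) ^ ((n:ℝ)) := by rw [Real.rpow_natCast]
      have e2 : (1/2:ℝ) ^ ((n:ℝ)) ≤ (1/2:ℝ) ^ (β k - 1) :=
        Real.rpow_le_rpow_of_exponent_ge (by norm_num) (by norm_num) (by linarith)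
      have e3 : (1/2:ℝ) ^ (β k - 1) = 2 * (1/2:ℝ) ^ (β k) := by
        rw [Real.rpow_sub (by norm_num), Real.rpow_one]; ring
      rw [e1]; rw [e3] at e2; exact e2
    calc M ^ β k / Real.Gamma (β k + 1) ≤ M * (K:ℝ)^K * (M/(K:ℝ))^n := by
          rw [← step2]; exact step1
      _ ≤ M * (K:ℝ)^K * ((1/2:ℝ)^n) := by
          apply mul_le_mul_of_nonneg_left step3 (by positivity)
      _ ≤ M * (K:ℝ)^K * (2 * (1/2:ℝ) ^ (β k)) := by
          apply mul_le_mul_of_nonneg_left step4 (by positivity)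
      _ = (2*M*(K:ℝ)^K) * (1/2:ℝ) ^ (β k) := by ring
  -- logarithmic eventual bound
  have hlog2 : 0 < Real.log 2 := Real.log_pos (by norm_num)
  set d : ℝ := Real.log 2 * a / (s + 3) with hd
  have hdpos : 0 < d := by positivity
  have hreal : ∀ᶠ X : ℝ in atTop,
      Real.log C' + Real.log X * s + Real.log X * 2 ≤ Real.log 2 * (a * X ^ ε) := by
    have hlo := (isLittleO_log_rpow_atTop hε).def hdpos
    filter_upwards [hlo, eventually_ge_atTop (max C' 1)] with X hX1 hX2
    have hX1' : (1:ℝ) ≤ X := le_trans (le_max_right _ _) hX2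
    have hXC : C' ≤ X := le_trans (le_max_left _ _) hX2
    have hXpos : (0:ℝ) < X := by linarith
    have hlog_nonneg : 0 ≤ Real.log X := Real.log_nonneg hX1'
    have hrle : Real.log X ≤ d * X ^ ε := by
      have := hX1
      rw [Real.norm_eq_abs, Real.norm_eq_abs, abs_of_nonneg hlog_nonneg,
        abs_of_nonneg (Real.rpow_nonneg hXpos.le _)] at this
      exact this
    have hlogC : Real.log C' ≤ Real.log X := (Real.log_le_log_iff hC'pos hXpos).2 hXC
    have hmul : (s+3) * Real.log X ≤ (s+3) * (d * X ^ ε) :=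
      mul_le_mul_of_nonneg_left hrle (by linarith)
    have hdd : (s+3) * d = Real.log 2 * a := by
      rw [hd]; field_simp
    nlinarith [hmul, hlogC, hlog_nonneg]
  have hev : ∀ᶠ k : ℕ in atTop, u k ≤ ((k:ℝ)+1) ^ (-2 : ℝ) := by
    filter_upwards [hβt.eventually_ge_atTop ((K:ℝ)+1), hxt.eventually hreal] with k hk1 hk2
    have hxk := hx0 k
    calc u k ≤ C * ((k:ℝ)+1) ^ s * (M ^ β k / Real.Gamma (β k + 1)) := hub k
      _ ≤ C * ((k:ℝ)+1) ^ s * ((2*M*(K:ℝ)^K) * (1/2:ℝ) ^ (β k)) := by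
          apply mul_le_mul_of_nonneg_left (core k hk1) (by positivity)
      _ = C' * ((k:ℝ)+1) ^ s * (1/2:ℝ) ^ (β k) := by rw [hC']; ring
      _ ≤ C' * ((k:ℝ)+1) ^ s * (1/2:ℝ) ^ (a * ((k:ℝ)+1) ^ ε) := by
          apply mul_le_mul_of_nonneg_left
            (Real.rpow_le_rpow_of_exponent_ge (by norm_num) (by norm_num) (hβ k))
            (by positivity)
      _ ≤ ((k:ℝ)+1) ^ (-2 : ℝ) := by
          rw [Real.rpow_def_of_pos hxk s, Real.rpow_def_of_pos hxk (-2 : ℝ),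
            Real.rpow_def_of_pos (by norm_num : (0:ℝ) < 1/2), ← Real.exp_log hC'pos,
            ← Real.exp_add, ← Real.exp_add, Real.exp_le_exp]
          have hl12 : Real.log (1/2) = -Real.log 2 := by
            rw [one_div, Real.log_inv]
          rw [hl12]
          nlinarith [hk2]
  -- conclude summability
  obtain ⟨K₁, hK₁⟩ := eventually_atTop.1 hev
  have hsum2 : Summable (fun k : ℕ => ((k:ℝ)+1) ^ (-2 : ℝ)) := by
    have : (fun k : ℕ => ((k:ℝ)+1) ^ (-2 : ℝ)) = fun k : ℕ => (((k+1:ℕ)):ℝ) ^ (-2 : ℝ) := by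
      funext k; push_cast; ring_nf
    rw [this]
    exact (summable_nat_add_iff 1).2 (Real.summable_nat_rpow.2 (by norm_num))
  have hsum3 : Summable (fun n : ℕ => ((((n+K₁ : ℕ)):ℝ)+1) ^ (-2 : ℝ)) :=
    (summable_nat_add_iff K₁).2 hsum2
  have : Summable (fun n : ℕ => u (n + K₁)) :=
    Summable.of_nonneg_of_le (fun n => hu0 _) (fun n => hK₁ (n+K₁) (Nat.le_add_left _ _)) hsum3
  exact (summable_nat_add_iff K₁).1 this

/-- **Uniform convergence on compacts of the tail of the kernel series**: assume a
Weyl-type lower bound `μ_k ≥ c k^{2/(N-1)}` for `k ≥ k₀` and sup-norm bounds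
`‖ψ_k‖_∞ ≤ C₂ k^{δ₂}`. With `α_k = (N-2)/2 - √(((N-2)/2)² + μ_k)`, the series
`Σ_{k>k₀} |j_{-α_k}(|x||y|)| |ψ_k(x/|x|)| |ψ_k(y/|y|)|`
converges uniformly for `x, y` in any compact set `𝒦 ⊂ ℝ^N`. -/
theorem kernel_tail_uniform_convergence (N : ℕ) (hN : 2 ≤ N)
    (μ : ℕ → ℝ) (hmono : Monotone μ)
    (c : ℝ) (hc : 0 < c) (k₀ : ℕ)
    (hweyl : ∀ k, k₀ ≤ k → c * (k : ℝ) ^ ((2 : ℝ) / ((N : ℝ) - 1)) ≤ μ k)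
    (ψ : ℕ → EuclideanSpace ℝ (Fin N) → ℂ)
    (C₂ δ₂ : ℝ) (hC₂ : 0 < C₂) (hδ₂ : 0 ≤ δ₂)
    (hψ : ∀ k θ, ‖ψ k θ‖ ≤ C₂ * (k : ℝ) ^ δ₂)
    (𝒦 : Set (EuclideanSpace ℝ (Fin N))) (h𝒦 : IsCompact 𝒦) :
    TendstoUniformlyOn
      (fun (n : ℕ) (p : EuclideanSpace ℝ (Fin N) × EuclideanSpace ℝ (Fin N)) =>
        ∑ k ∈ Finset.range n,
          |sphBesselJ N (-(((N : ℝ) - 2) / 2 -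
              Real.sqrt (((((N : ℝ) - 2) / 2) ^ 2) + μ (k₀ + 1 + k))))
            (‖p.1‖ * ‖p.2‖)| *
          ‖ψ (k₀ + 1 + k) (‖p.1‖⁻¹ • p.1)‖ * ‖ψ (k₀ + 1 + k) (‖p.2‖⁻¹ • p.2)‖)
      (fun p =>
        ∑' k : ℕ,
          |sphBesselJ N (-(((N : ℝ) - 2) / 2 -
              Real.sqrt (((((N : ℝ) - 2) / 2) ^ 2) + μ (k₀ + 1 + k))))
            (‖p.1‖ * ‖p.2‖)| *
          ‖ψ (k₀ + 1 + k) (‖p.1‖⁻¹ • p.1)‖ * ‖ψ (k₀ + 1 + k) (‖p.2‖⁻¹ • p.2)‖)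
      atTop (𝒦 ×ˢ 𝒦) := by
  classical
  have hN2 : (2:ℝ) ≤ (N:ℝ) := by exact_mod_cast hN
  obtain ⟨R, hR⟩ := isBounded_iff_forall_norm_le.1 h𝒦.isBounded
  set q : ℝ := ((N:ℝ)-2)/2 with hq
  have hq0 : 0 ≤ q := by rw [hq]; linarith
  set M : ℝ := (max R 1) * (max R 1) with hM
  have hmax1 : (1:ℝ) ≤ max R 1 := le_max_right R 1
  have hM1 : (1:ℝ) ≤ M := by rw [hM]; nlinarith
  set β : ℕ → ℝ := fun k => Real.sqrt (q^2 + μ (k₀+1+k)) with hβdef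
  set ε : ℝ := 1 / ((N:ℝ)-1) with hε
  have hεpos : 0 < ε := by
    rw [hε]; exact div_pos one_pos (by linarith)
  have hcast : ∀ k : ℕ, (0:ℝ) < ((k₀+1+k:ℕ):ℝ) := fun k => by
    exact_mod_cast Nat.succ_le_of_lt (by omega)
  have hμpos : ∀ k : ℕ, 0 < μ (k₀+1+k) := by
    intro k
    refine lt_of_lt_of_le ?_ (hweyl (k₀+1+k) (by omega))
    exact mul_pos hc (Real.rpow_pos_of_pos (hcast k) _)
  have hβ0 : ∀ k, 0 < β k := fun k =>
    Real.sqrt_pos.2 (by nlinarith [hμpos k, sq_nonneg q])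
  have hβa : ∀ k, q ≤ β k := by
    intro k
    calc q = Real.sqrt (q^2) := (Real.sqrt_sq hq0).symm
      _ ≤ β k := Real.sqrt_le_sqrt (by nlinarith [hμpos k])
  have hβlow : ∀ k : ℕ, Real.sqrt c * ((k:ℝ)+1) ^ ε ≤ β k := by
    intro k
    have hm : ((k:ℝ)+1) ≤ ((k₀+1+k:ℕ):ℝ) := by push_cast; linarith [Nat.cast_nonneg (α := ℝ) k₀]
    have hmpos := hcast k
    have e2 : (((k₀+1+k:ℕ):ℝ)^ε)^(2:ℕ) = ((k₀+1+k:ℕ):ℝ) ^ ((2:ℝ)/((N:ℝ)-1)) := by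
      rw [← Real.rpow_natCast (((k₀+1+k:ℕ):ℝ)^ε) 2, ← Real.rpow_mul hmpos.le]
      congr 1
      rw [hε]; push_cast; ring
    calc Real.sqrt c * ((k:ℝ)+1) ^ ε
        ≤ Real.sqrt c * ((k₀+1+k:ℕ):ℝ) ^ ε := by
          apply mul_le_mul_of_nonneg_left
            (Real.rpow_le_rpow (by positivity) hm hεpos.le) (Real.sqrt_nonneg c)
      _ = Real.sqrt ((Real.sqrt c * ((k₀+1+k:ℕ):ℝ) ^ ε)^2) := by
          rw [Real.sqrt_sq (by positivity)]
      _ = Real.sqrt (c * ((k₀+1+k:ℕ):ℝ) ^ ((2:ℝ)/((N:ℝ)-1))) := by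
          rw [mul_pow, Real.sq_sqrt hc.le, e2]
      _ ≤ β k := by
          apply Real.sqrt_le_sqrt
          have := hweyl (k₀+1+k) (by omega)
          nlinarith [sq_nonneg q]
  -- the majorant
  set u : ℕ → ℝ := fun k => Real.exp ((M/2)^2) * M ^ β k / Real.Gamma (β k + 1) *
      (C₂ * ((k₀+1+k:ℕ):ℝ) ^ δ₂) * (C₂ * ((k₀+1+k:ℕ):ℝ) ^ δ₂) with hudef
  have hA : ∀ k, 0 ≤ Real.exp ((M/2)^2) * M ^ β k / Real.Gamma (β k + 1) := by
    intro k
    apply div_nonneg _ (Real.Gamma_pos_of_pos (by linarith [hβ0 k])).le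
    positivity
  have hu0 : ∀ k, 0 ≤ u k := by
    intro k
    apply mul_nonneg (mul_nonneg (hA k) (by positivity)) (by positivity)
  have husum : Summable u := by
    apply summable_bound M (Real.sqrt c) ε
      (Real.exp ((M/2)^2) * (C₂ * ((k₀+1:ℕ):ℝ)^δ₂)^2) (δ₂+δ₂)
      hM1 (Real.sqrt_pos.2 hc) hεpos (by positivity) (by linarith) u β hu0 ?_ hβlow
    intro k
    have hmle : ((k₀+1+k:ℕ):ℝ) ≤ ((k₀+1:ℕ):ℝ) * ((k:ℝ)+1) := by
      push_cast
      nlinarith [Nat.cast_nonneg (α := ℝ) k, Nat.cast_nonneg (α := ℝ) k₀]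
    have hX : C₂ * ((k₀+1+k:ℕ):ℝ) ^ δ₂ ≤
        C₂ * (((k₀+1:ℕ):ℝ)^δ₂ * ((k:ℝ)+1)^δ₂) := by
      apply mul_le_mul_of_nonneg_left _ hC₂.le
      rw [← Real.mul_rpow (by positivity) (by positivity)]
      exact Real.rpow_le_rpow (by positivity) hmle hδ₂
    have hXnn : 0 ≤ C₂ * ((k₀+1+k:ℕ):ℝ) ^ δ₂ := by positivity
    have step : u k ≤ Real.exp ((M/2)^2) * M ^ β k / Real.Gamma (β k + 1) *
        (C₂ * (((k₀+1:ℕ):ℝ)^δ₂ * ((k:ℝ)+1)^δ₂)) *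
        (C₂ * (((k₀+1:ℕ):ℝ)^δ₂ * ((k:ℝ)+1)^δ₂)) := by
      rw [hudef]
      apply mul_le_mul (mul_le_mul_of_nonneg_left hX (hA k)) hX hXnn
      apply mul_nonneg (hA k) (by positivity)
    refine step.trans (le_of_eq ?_)
    have hrp : ((k:ℝ)+1)^δ₂ * ((k:ℝ)+1)^δ₂ = ((k:ℝ)+1)^(δ₂+δ₂) := by
      rw [← Real.rpow_add (by positivity)]
    rw [← hrp]; ring
  -- apply the M-test
  apply tendstoUniformlyOn_tsum_nat husum
  intro n p hp
  rw [Set.mem_prod] at hp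
  have hr0 : 0 ≤ ‖p.1‖ * ‖p.2‖ := by positivity
  have hrM : ‖p.1‖ * ‖p.2‖ ≤ M := by
    rw [hM]
    apply mul_le_mul (le_trans (hR _ hp.1) (le_max_left R 1))
      (le_trans (hR _ hp.2) (le_max_left R 1)) (norm_nonneg _) (by linarith)
  have hsph : |sphBesselJ N (-(q - Real.sqrt (q^2 + μ (k₀+1+n)))) (‖p.1‖ * ‖p.2‖)| ≤
      Real.exp ((M/2)^2) * M ^ β n / Real.Gamma (β n + 1) := by
    rw [neg_sub]
    exact sphBesselJ_abs_le N hN (β n) M (‖p.1‖ * ‖p.2‖) (hβa n) (hβ0 n) hM1 hr0 hrM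
  rw [Real.norm_eq_abs, abs_of_nonneg (by positivity)]
  calc |sphBesselJ N (-(q - Real.sqrt (q^2 + μ (k₀+1+n)))) (‖p.1‖ * ‖p.2‖)| *
        ‖ψ (k₀+1+n) (‖p.1‖⁻¹ • p.1)‖ * ‖ψ (k₀+1+n) (‖p.2‖⁻¹ • p.2)‖
      ≤ Real.exp ((M/2)^2) * M ^ β n / Real.Gamma (β n + 1) *
        (C₂ * ((k₀+1+n:ℕ):ℝ) ^ δ₂) * (C₂ * ((k₀+1+n:ℕ):ℝ) ^ δ₂) := by
        apply mul_le_mul (mul_le_mul hsph (hψ _ _) (norm_nonneg _) (hA n)) (hψ _ _)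
          (norm_nonneg _)
        apply mul_nonneg (hA n) (by positivity)
    _ = u n := by rw [hudef]
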